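/- Let a ∈ L^∞(ℝ) have finite limits a₋ = lim_{y→−∞} a(y) and a₊ = lim_{y→+∞} a(y). Then for each x₀ ∈ ℝ, the matrix-valued function γ^a(x₁,x₂) = ∫_ℝ a((−x₁+y)/(2√x₂)) H(y)[H(y)]^T dy on Π = ℝ × (0,∞) satisfies lim_{(x₁,x₂)→(x₀,0⁺)} γ^a(x₁,x₂) = a₋ · ∫_{−∞}^{x₀} H(y)[H(y)]^T dy + a₊ · ∫_{x₀}^{+∞} H(y)[H(y)]^T dy, the limit being taken over (x₁,x₂) ∈ ℝ × (0,∞) with x₁ → x₀ and x₂ → 0⁺. -/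

import Mathlib

open MeasureTheory Filter Topology

noncomputable section

/-- The physicists' Hermite polynomial `H_m(y) = (−1)^m e^{y²} (d/dy)^m e^{−y²}`. -/
def hermiteH (m : ℕ) (y : ℝ) : ℝ :=
  (-1 : ℝ) ^ m * Real.exp (y ^ 2) * iteratedDeriv m (fun x => Real.exp (-x ^ 2)) y

/-- The Hermite function `h_m(y) = (2^m m! √π)^{−1/2} H_m(y) e^{−y²/2}`. -/
def hermiteFun (m : ℕ) (y : ℝ) : ℝ :=
  (Real.sqrt (2 ^ m * m.factorial * Real.sqrt Real.pi))⁻¹ * hermiteH m y *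
    Real.exp (-y ^ 2 / 2)


lemma pow_le_exp_aux {x : ℝ} (hx : 0 ≤ x) (k : ℕ) :
    x ^ k ≤ (k.factorial : ℝ) * Real.exp x := by
  have h := Real.sum_le_exp_of_nonneg hx (k + 1)
  have h1 : x ^ k / (k.factorial : ℝ) ≤
      ∑ i ∈ Finset.range (k + 1), x ^ i / (i.factorial : ℝ) := by
    refine Finset.single_le_sum (f := fun i => x ^ i / (i.factorial : ℝ)) ?_ ?_
    · intro i _; positivity
    · simp
  have hk : (0 : ℝ) < k.factorial := by positivity
  calc x ^ k = x ^ k / (k.factorial : ℝ) * k.factorial := by field_simp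
    _ ≤ Real.exp x * k.factorial :=
        mul_le_mul_of_nonneg_right (h1.trans h) hk.le
    _ = (k.factorial : ℝ) * Real.exp x := mul_comm _ _

lemma integrable_pow_gauss (k : ℕ) :
    Integrable (fun y : ℝ => y ^ k * Real.exp (-y ^ 2)) := by
  have hb : Integrable (fun y : ℝ =>
      ((k.factorial : ℝ) * Real.exp 2⁻¹) * Real.exp (-(2⁻¹) * y ^ 2)) :=
    (integrable_exp_neg_mul_sq (by norm_num)).const_mul _
  refine hb.mono' ?_ ?_
  · exact ((measurable_id.pow_const k).mul
      ((measurable_id.pow_const 2).neg.exp)).aestronglyMeasurable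
  · filter_upwards with y
    have h1 : |y| ^ k ≤ (k.factorial : ℝ) * Real.exp |y| :=
      pow_le_exp_aux (abs_nonneg y) k
    have h2 : |y| - y ^ 2 ≤ 2⁻¹ - 2⁻¹ * y ^ 2 := by
      nlinarith [sq_abs y, sq_nonneg (|y| - 1)]
    have hk : (0 : ℝ) ≤ k.factorial := by positivity
    calc ‖y ^ k * Real.exp (-y ^ 2)‖ = |y| ^ k * Real.exp (-y ^ 2) := by
          rw [norm_mul, Real.norm_eq_abs, Real.norm_eq_abs, abs_pow, Real.abs_exp]
      _ ≤ (k.factorial : ℝ) * Real.exp |y| * Real.exp (-y ^ 2) :=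
          mul_le_mul_of_nonneg_right h1 (Real.exp_pos _).le
      _ = (k.factorial : ℝ) * Real.exp (|y| - y ^ 2) := by
          rw [mul_assoc, ← Real.exp_add]; ring_nf
      _ ≤ (k.factorial : ℝ) * Real.exp (2⁻¹ - 2⁻¹ * y ^ 2) :=
          mul_le_mul_of_nonneg_left (Real.exp_le_exp.mpr h2) hk
      _ = ((k.factorial : ℝ) * Real.exp 2⁻¹) * Real.exp (-(2⁻¹) * y ^ 2) := by
          rw [mul_assoc, ← Real.exp_add]; ring_nf

lemma integrable_poly_gauss (P : Polynomial ℝ) :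
    Integrable (fun y : ℝ => P.eval y * Real.exp (-y ^ 2)) := by
  have : (fun y : ℝ => P.eval y * Real.exp (-y ^ 2)) = fun y =>
      ∑ i ∈ Finset.range (P.natDegree + 1),
        P.coeff i * (y ^ i * Real.exp (-y ^ 2)) := by
    funext y
    rw [Polynomial.eval_eq_sum_range, Finset.sum_mul]
    simp [mul_assoc]
  rw [this]
  exact integrable_finset_sum _ fun i _ => (integrable_pow_gauss i).const_mul _

lemma iteratedDeriv_gauss (m : ℕ) : ∃ p : Polynomial ℝ, ∀ y : ℝ,
    iteratedDeriv m (fun x => Real.exp (-x ^ 2)) y = p.eval y * Real.exp (-y ^ 2) := by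
  induction m with
  | zero => exact ⟨1, fun y => by simp⟩
  | succ m ih =>
    obtain ⟨p, hp⟩ := ih
    refine ⟨p.derivative - Polynomial.C 2 * Polynomial.X * p, fun y => ?_⟩
    rw [iteratedDeriv_succ, funext hp]
    have h0 : HasDerivAt (fun x : ℝ => -x ^ 2) (-(2 * y)) y := by
      exact (hasDerivAt_pow 2 y).neg.congr_deriv (by norm_num)
    have h1 : HasDerivAt (fun x : ℝ => p.eval x * Real.exp (-x ^ 2))
        (p.derivative.eval y * Real.exp (-y ^ 2) +
          p.eval y * (Real.exp (-y ^ 2) * -(2 * y))) y :=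
      (p.hasDerivAt y).mul h0.exp
    rw [h1.deriv]
    simp only [Polynomial.eval_sub, Polynomial.eval_mul, Polynomial.eval_C,
      Polynomial.eval_X]
    ring

lemma hermiteFun_rep (m : ℕ) : ∃ q : Polynomial ℝ, ∀ y : ℝ,
    hermiteFun m y = q.eval y * Real.exp (-y ^ 2 / 2) := by
  obtain ⟨p, hp⟩ := iteratedDeriv_gauss m
  refine ⟨Polynomial.C ((Real.sqrt (2 ^ m * m.factorial * Real.sqrt Real.pi))⁻¹ *
    (-1 : ℝ) ^ m) * p, fun y => ?_⟩
  simp only [hermiteFun, hermiteH, hp y, Polynomial.eval_mul, Polynomial.eval_C]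
  have : Real.exp (y ^ 2) * Real.exp (-y ^ 2) = 1 := by
    rw [← Real.exp_add]; simp
  calc (Real.sqrt (2 ^ m * ↑m.factorial * Real.sqrt Real.pi))⁻¹ *
        ((-1 : ℝ) ^ m * Real.exp (y ^ 2) * (p.eval y * Real.exp (-y ^ 2))) *
        Real.exp (-y ^ 2 / 2)
      = (Real.sqrt (2 ^ m * ↑m.factorial * Real.sqrt Real.pi))⁻¹ * (-1 : ℝ) ^ m *
        p.eval y * (Real.exp (y ^ 2) * Real.exp (-y ^ 2)) * Real.exp (-y ^ 2 / 2) := by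
        ring
    _ = (Real.sqrt (2 ^ m * ↑m.factorial * Real.sqrt Real.pi))⁻¹ * (-1 : ℝ) ^ m *
        p.eval y * Real.exp (-y ^ 2 / 2) := by rw [this]; ring

/-- The matrix `H(y)[H(y)]ᵀ`, where `H(y) = (h_0(y), …, h_{n−1}(y))ᵀ`. -/
def HHT (n : ℕ) (y : ℝ) : Matrix (Fin n) (Fin n) ℝ :=
  Matrix.of fun j k : Fin n => hermiteFun j y * hermiteFun k y

/-- `γ^a(x₁,x₂) = ∫_ℝ a((−x₁+y)/(2√x₂)) H(y)[H(y)]ᵀ dy` as a complex `n × n` matrix. -/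
def gammaA (n : ℕ) (a : ℝ → ℂ) (x₁ x₂ : ℝ) : Matrix (Fin n) (Fin n) ℂ :=
  Matrix.of fun j k : Fin n =>
    ∫ y : ℝ, a ((-x₁ + y) / (2 * Real.sqrt x₂)) * (HHT n y j k : ℂ)


lemma HHT_rep (n : ℕ) (j k : Fin n) : ∃ q : Polynomial ℝ, ∀ y : ℝ,
    HHT n y j k = q.eval y * Real.exp (-y ^ 2) := by
  obtain ⟨qj, hj⟩ := hermiteFun_rep j
  obtain ⟨qk, hk⟩ := hermiteFun_rep k
  refine ⟨qj * qk, fun y => ?_⟩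
  simp only [HHT, Matrix.of_apply, hj y, hk y, Polynomial.eval_mul]
  rw [show Real.exp (-y ^ 2) = Real.exp (-y ^ 2 / 2) * Real.exp (-y ^ 2 / 2) by
    rw [← Real.exp_add]; ring_nf]
  ring

lemma tendsto_scale (x₀ : ℝ) {y : ℝ} :
    Tendsto (fun p : ℝ × ℝ => 2 * Real.sqrt p.2) (𝓝 x₀ ×ˢ 𝓝[>] (0 : ℝ))
      (𝓝[>] (0 : ℝ)) := by
  have hsq : Tendsto (fun x : ℝ => 2 * Real.sqrt x) (𝓝[>] (0 : ℝ)) (𝓝[>] (0 : ℝ)) := by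
    apply tendsto_nhdsWithin_of_tendsto_nhds_of_eventually_within
    · have h := (Real.continuous_sqrt.tendsto 0).const_mul (2 : ℝ)
      rw [Real.sqrt_zero, mul_zero] at h
      exact h.mono_left nhdsWithin_le_nhds
    · filter_upwards [self_mem_nhdsWithin] with x hx
      exact mul_pos two_pos (Real.sqrt_pos.mpr hx)
  exact hsq.comp tendsto_snd

/-- If `a ∈ L^∞(ℝ)` has limits `a₋` at `−∞` and `a₊` at `+∞`, then for
every `x₀ ∈ ℝ`, `γ^a(x₁,x₂) → a₋ ∫_{−∞}^{x₀} H Hᵀ + a₊ ∫_{x₀}^{∞} H Hᵀ` as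
`x₁ → x₀` and `x₂ → 0⁺`. -/
theorem gammaA_limit_at_boundary (n : ℕ) (hn : 1 ≤ n) (a : ℝ → ℂ)
    (ha_meas : Measurable a) (ha_bdd : ∃ C : ℝ, ∀ y : ℝ, ‖a y‖ ≤ C)
    (aminus aplus : ℂ)
    (haminus : Tendsto a atBot (𝓝 aminus)) (haplus : Tendsto a atTop (𝓝 aplus))
    (x₀ : ℝ) :
    Tendsto (fun p : ℝ × ℝ => gammaA n a p.1 p.2) (𝓝 x₀ ×ˢ 𝓝[>] (0 : ℝ))
      (𝓝 (aminus • Matrix.of (fun j k : Fin n =>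
              ((∫ y in Set.Iic x₀, HHT n y j k : ℝ) : ℂ)) +
            aplus • Matrix.of (fun j k : Fin n =>
              ((∫ y in Set.Ioi x₀, HHT n y j k : ℝ) : ℂ)))) := by
  obtain ⟨C, hC⟩ := ha_bdd
  set l : Filter (ℝ × ℝ) := 𝓝 x₀ ×ˢ 𝓝[>] (0 : ℝ) with hl
  refine tendsto_pi_nhds.2 fun j => tendsto_pi_nhds.2 fun k => ?_
  obtain ⟨q, hq⟩ := HHT_rep n j k
  set f : ℝ → ℝ := fun y => HHT n y j k with hfdef
  have hf_cont : Continuous f := by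
    rw [hfdef, funext hq]
    exact q.continuous.mul (Real.continuous_exp.comp (continuous_pow 2).neg)
  have hf_int : Integrable f := by
    rw [hfdef, funext hq]; exact integrable_poly_gauss q
  set g : ℝ → ℂ := fun y => (if y ≤ x₀ then aminus else aplus) * (f y : ℂ) with hgdef
  have key : Tendsto (fun p : ℝ × ℝ =>
      ∫ y : ℝ, a ((-p.1 + y) / (2 * Real.sqrt p.2)) * (f y : ℂ)) l (𝓝 (∫ y : ℝ, g y)) := by
    apply tendsto_integral_filter_of_dominated_convergence (bound := fun y => C * |f y|)
    · filter_upwards with p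
      exact ((ha_meas.comp ((measurable_const.add measurable_id).div_const _)).mul
        (Complex.measurable_ofReal.comp hf_cont.measurable)).aestronglyMeasurable
    · filter_upwards with p
      filter_upwards with y
      rw [norm_mul, Complex.norm_real, Real.norm_eq_abs]
      exact mul_le_mul_of_nonneg_right (hC _) (abs_nonneg _)
    · exact hf_int.abs.const_mul C
    · have hae : ∀ᵐ y : ℝ, y ≠ x₀ := by
        refine ae_iff.mpr ?_
        simp only [ne_eq, not_not, Set.setOf_eq_eq_singleton]
        exact measure_singleton x₀
      filter_upwards [hae] with y hy
      have hden : Tendsto (fun p : ℝ × ℝ => (2 * Real.sqrt p.2)⁻¹) l atTop :=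
        tendsto_inv_nhdsGT_zero.comp (tendsto_scale x₀ (y := y))
      have hnum : Tendsto (fun p : ℝ × ℝ => -p.1 + y) l (𝓝 (-x₀ + y)) :=
        (tendsto_fst.neg).add_const y
      have hform : ∀ p : ℝ × ℝ, (-p.1 + y) / (2 * Real.sqrt p.2) =
          (-p.1 + y) * (2 * Real.sqrt p.2)⁻¹ := fun p => div_eq_mul_inv _ _
      rcases lt_or_gt_of_ne hy with hlt | hgt
      · -- y < x₀ : argument → atBot
        have harg : Tendsto (fun p : ℝ × ℝ => (-p.1 + y) / (2 * Real.sqrt p.2)) l atBot := by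
          simp only [hform]
          exact hnum.neg_mul_atTop (by linarith) hden
        have := (haminus.comp harg).mul_const (f y : ℂ)
        simpa [hgdef, if_pos hlt.le] using this
      · -- x₀ < y : argument → atTop
        have harg : Tendsto (fun p : ℝ × ℝ => (-p.1 + y) / (2 * Real.sqrt p.2)) l atTop := by
          simp only [hform]
          exact hnum.pos_mul_atTop (by linarith) hden
        have := (haplus.comp harg).mul_const (f y : ℂ)
        simpa [hgdef, if_neg (not_le.mpr hgt)] using this
  have hg_eq : ∫ y : ℝ, g y =
      aminus * ((∫ y in Set.Iic x₀, f y : ℝ) : ℂ) +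
        aplus * ((∫ y in Set.Ioi x₀, f y : ℝ) : ℂ) := by
    have hIic : ∫ y in Set.Iic x₀, g y =
        aminus * ((∫ y in Set.Iic x₀, f y : ℝ) : ℂ) := by
      rw [setIntegral_congr_fun measurableSet_Iic
        (g := fun y => aminus * (f y : ℂ))
        (fun y hy => by simp only [hgdef]; rw [if_pos (Set.mem_Iic.mp hy)])]
      rw [integral_const_mul]
      congr 1
      exact integral_ofReal
    have hIoi : ∫ y in Set.Ioi x₀, g y =
        aplus * ((∫ y in Set.Ioi x₀, f y : ℝ) : ℂ) := by
      rw [setIntegral_congr_fun measurableSet_Ioi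
        (g := fun y => aplus * (f y : ℂ))
        (fun y hy => by simp only [hgdef]; rw [if_neg (not_le.mpr (Set.mem_Ioi.mp hy))])]
      rw [integral_const_mul]
      congr 1
      exact integral_ofReal
    have hg_int : Integrable g := by
      have hmg : Measurable g :=
        ((measurable_const.piecewise measurableSet_Iic measurable_const).mul
          (Complex.measurable_ofReal.comp hf_cont.measurable))
      refine Integrable.mono' ((hf_int.abs.const_mul (‖aminus‖ + ‖aplus‖))) hmg.aestronglyMeasurable ?_
      filter_upwards with y
      rw [hgdef]
      simp only [norm_mul, Complex.norm_real, Real.norm_eq_abs]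
      refine mul_le_mul_of_nonneg_right ?_ (abs_nonneg _)
      split
      · exact le_add_of_nonneg_right (norm_nonneg _) |>.trans_eq rfl
      · exact le_add_of_nonneg_left (norm_nonneg _)
    rw [← intervalIntegral.integral_Iic_add_Ioi hg_int.integrableOn hg_int.integrableOn, hIic, hIoi]
  rw [hg_eq] at key
  have : ∀ p : ℝ × ℝ, gammaA n a p.1 p.2 j k =
      ∫ y : ℝ, a ((-p.1 + y) / (2 * Real.sqrt p.2)) * (f y : ℂ) := fun p => rfl
  simp only [this]
  convert key using 2
  rfl
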